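/- Let A and B be self-adjoint operators bounded below with discrete spectra below a value κ, arising as the Neumann Laplacians on two disjoint open pieces D₁, D₂ obtained by cutting a domain D along a hypersurface. Then for any κ > 0, the number of eigenvalues of the Laplacian on D below κ is at most the number of eigenvalues on D₁ below κ plus the number of eigenvalues on D₂ below κ. -/

import Mathlib

open Module

section Aux

variable {E : Type*} [NormedAddCommGroup E] [InnerProductSpace ℝ E]

/-- On the span of eigenspaces with eigenvalue `< κ`, the quadratic form is `< κ‖·‖²`. -/
lemma nb_form_lt (T : E →ₗ[ℝ] E)
    (hT : ∀ x y : E, (inner ℝ (T x) y : ℝ) = inner ℝ x (T y)) (κ : ℝ)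
    {x : E} (hx : x ∈ ⨆ μ ∈ Set.Iio κ, Module.End.eigenspace (T : Module.End ℝ E) μ)
    (hx0 : x ≠ 0) : (inner ℝ (T x) x : ℝ) < κ * ‖x‖ ^ 2 := by
  classical
  rw [iSup_subtype'] at hx
  rw [Submodule.mem_iSup_iff_exists_finsupp] at hx
  obtain ⟨g, hg, hsum⟩ := hx
  have hgT : ∀ i : Set.Iio κ, T (g i) = (i : ℝ) • g i := fun i =>
    Module.End.mem_eigenspace_iff.mp (hg i)
  have horth : ∀ i j : Set.Iio κ, i ≠ j → (inner ℝ (g i) (g j) : ℝ) = 0 := by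
    intro i j hij
    have h := hT (g i) (g j)
    rw [hgT, hgT, real_inner_smul_left, real_inner_smul_right] at h
    by_contra hne
    exact (fun h' => hij (Subtype.ext h')) (mul_right_cancel₀ hne h)
  set s := g.support with hs
  have hsum' : x = ∑ i ∈ s, g i := by rw [← hsum]; rfl
  have hTx : T x = ∑ i ∈ s, (i : ℝ) • g i := by
    rw [hsum', map_sum]; exact Finset.sum_congr rfl fun i _ => hgT i
  have hdiag : ∀ (c : ℝ), ∀ i ∈ s, (inner ℝ (c • g i) (∑ j ∈ s, g j) : ℝ) = c * ‖g i‖ ^ 2 := by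
    intro c i hi
    rw [inner_sum, Finset.sum_eq_single i
      (fun j _ hji => by rw [real_inner_smul_left, horth i j (Ne.symm hji), mul_zero])
      (fun hi' => absurd hi hi'), real_inner_smul_left, real_inner_self_eq_norm_sq]
  have hinner : (inner ℝ (T x) x : ℝ) = ∑ i ∈ s, (i : ℝ) * ‖g i‖ ^ 2 := by
    rw [hTx, hsum', sum_inner]
    exact Finset.sum_congr rfl fun i hi => hdiag _ i hi
  have hnorm : ‖x‖ ^ 2 = ∑ i ∈ s, ‖g i‖ ^ 2 := by
    rw [← real_inner_self_eq_norm_sq, hsum', sum_inner]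
    refine Finset.sum_congr rfl fun i hi => ?_
    simpa using hdiag 1 i hi
  have hne : s.Nonempty := by
    rcases s.eq_empty_or_nonempty with h | h
    · exact absurd (by rw [hsum', h, Finset.sum_empty]) hx0
    · exact h
  obtain ⟨i0, hi0⟩ := hne
  have hlt : ∑ i ∈ s, (i : ℝ) * ‖g i‖ ^ 2 < ∑ i ∈ s, κ * ‖g i‖ ^ 2 := by
    refine Finset.sum_lt_sum (fun i _ =>
      mul_le_mul_of_nonneg_right (le_of_lt i.2) (sq_nonneg _)) ⟨i0, hi0, ?_⟩
    have hgi : g i0 ≠ 0 := Finsupp.mem_support_iff.mp hi0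
    have hpos : 0 < ‖g i0‖ ^ 2 := pow_pos (norm_pos_iff.mpr hgi) 2
    exact mul_lt_mul_of_pos_right i0.2 hpos
  rw [hinner, hnorm, Finset.mul_sum]
  exact hlt

/-- The span of eigenspaces with eigenvalue `< κ` is invariant under `T`. -/
lemma nb_mapsTo (T : E →ₗ[ℝ] E) (κ : ℝ)
    {x : E} (hx : x ∈ ⨆ μ ∈ Set.Iio κ, Module.End.eigenspace (T : Module.End ℝ E) μ) :
    T x ∈ ⨆ μ ∈ Set.Iio κ, Module.End.eigenspace (T : Module.End ℝ E) μ := by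
  rw [iSup_subtype'] at hx ⊢
  refine Submodule.iSup_induction _ (motive := fun y => T y ∈ _) hx ?_ ?_ ?_
  · intro i y hy
    have : T y = (i : ℝ) • y := Module.End.mem_eigenspace_iff.mp hy
    rw [this]
    exact Submodule.smul_mem _ _ (Submodule.mem_iSup_of_mem i hy)
  · simp
  · intro a b ha hb
    rw [map_add]; exact Submodule.add_mem _ ha hb

/-- The span of eigenspaces with eigenvalue `< κ` is finite-dimensional, given the
min-max bound. -/
lemma nb_finiteDimensional (T : E →ₗ[ℝ] E)
    (hT : ∀ x y : E, (inner ℝ (T x) y : ℝ) = inner ℝ x (T y)) (κ : ℝ) (k : ℕ)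
    (hk : Module.finrank ℝ
      ↥(⨆ μ ∈ Set.Iio κ, Module.End.eigenspace (T : Module.End ℝ E) μ) = k)
    (hdisc : ∀ V : Submodule ℝ E,
      (∀ f ∈ V, f ≠ 0 → (inner ℝ (T f) f : ℝ) < κ * ‖f‖ ^ 2) → Module.finrank ℝ V ≤ k) :
    FiniteDimensional ℝ
      ↥(⨆ μ ∈ Set.Iio κ, Module.End.eigenspace (T : Module.End ℝ E) μ) := by
  set F := ⨆ μ ∈ Set.Iio κ, Module.End.eigenspace (T : Module.End ℝ E) μ with hF
  by_contra hfd
  have hk0 : k = 0 := by rw [← hk, Module.finrank_of_infinite_dimensional hfd]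
  have hbot : F = ⊥ := by
    by_contra hFne
    obtain ⟨x, hxF, hx0⟩ := Submodule.exists_mem_ne_zero_of_ne_bot hFne
    have h1 : Module.finrank ℝ ↥(ℝ ∙ x) ≤ k := by
      refine hdisc _ fun f hf hf0 => ?_
      have : f ∈ F := Submodule.span_le.mpr (by simpa using hxF) hf
      exact nb_form_lt T hT κ this hf0
    rw [finrank_span_singleton hx0, hk0] at h1
    omega
  rw [hbot] at hfd
  exact hfd inferInstance

/-- No nonzero vector orthogonal to the span of the low eigenspaces can have small
quadratic form. -/
lemma nb_no_orth (T : E →ₗ[ℝ] E)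
    (hT : ∀ x y : E, (inner ℝ (T x) y : ℝ) = inner ℝ x (T y)) (κ : ℝ) (k : ℕ)
    (hk : Module.finrank ℝ
      ↥(⨆ μ ∈ Set.Iio κ, Module.End.eigenspace (T : Module.End ℝ E) μ) = k)
    (hdisc : ∀ V : Submodule ℝ E,
      (∀ f ∈ V, f ≠ 0 → (inner ℝ (T f) f : ℝ) < κ * ‖f‖ ^ 2) → Module.finrank ℝ V ≤ k)
    {g : E} (hg : g ∈ (⨆ μ ∈ Set.Iio κ, Module.End.eigenspace (T : Module.End ℝ E) μ)ᗮ)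
    (hlt : (inner ℝ (T g) g : ℝ) < κ * ‖g‖ ^ 2) : g = 0 := by
  set F := ⨆ μ ∈ Set.Iio κ, Module.End.eigenspace (T : Module.End ℝ E) μ with hF
  by_contra hg0
  haveI : FiniteDimensional ℝ F := nb_finiteDimensional T hT κ k hk hdisc
  set V := F ⊔ (ℝ ∙ g) with hV
  have hbound : ∀ f ∈ V, f ≠ 0 → (inner ℝ (T f) f : ℝ) < κ * ‖f‖ ^ 2 := by
    intro f hf hf0
    obtain ⟨h, hh, z, hz, rfl⟩ := Submodule.mem_sup.mp hf
    obtain ⟨c, rfl⟩ := Submodule.mem_span_singleton.mp hz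
    have hTh : T h ∈ F := nb_mapsTo T κ hh
    have hc1 : (inner ℝ (T h) (c • g) : ℝ) = 0 := by
      rw [real_inner_smul_right, hg (T h) hTh, mul_zero]
    have hc2 : (inner ℝ (T (c • g)) h : ℝ) = 0 := by
      rw [hT, real_inner_comm]; exact hc1
    have hc3 : (inner ℝ h (c • g) : ℝ) = 0 := by
      rw [real_inner_smul_right, hg h hh, mul_zero]
    have hnorm : ‖h + c • g‖ ^ 2 = ‖h‖ ^ 2 + c ^ 2 * ‖g‖ ^ 2 := by
      have hsm : ‖c • g‖ ^ 2 = c ^ 2 * ‖g‖ ^ 2 := by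
        rw [norm_smul]; simp [mul_pow, sq_abs]
      rw [norm_add_sq_real, hc3, hsm]; ring
    have hform : (inner ℝ (T (h + c • g)) (h + c • g) : ℝ)
        = (inner ℝ (T h) h : ℝ) + c ^ 2 * (inner ℝ (T g) g : ℝ) := by
      rw [map_add, inner_add_left, inner_add_right, inner_add_right, hc1, hc2,
        map_smul, real_inner_smul_left, real_inner_smul_right]
      ring
    rw [hform, hnorm]
    have hgpos : (inner ℝ (T g) g : ℝ) < κ * ‖g‖ ^ 2 := hlt
    by_cases hh0 : h = 0
    · have hc0 : c ≠ 0 := by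
        rintro rfl
        simp [hh0] at hf0
      have hcsq : 0 < c ^ 2 := by positivity
      rw [hh0]
      simp only [map_zero, inner_zero_left, norm_zero]
      nlinarith
    · have h1 : (inner ℝ (T h) h : ℝ) < κ * ‖h‖ ^ 2 := nb_form_lt T hT κ hh hh0
      nlinarith [sq_nonneg c, mul_le_mul_of_nonneg_left (le_of_lt hgpos) (sq_nonneg c)]
  have hVle : Module.finrank ℝ V ≤ k := hdisc V hbound
  have hgV : g ∈ V := Submodule.mem_sup_right (Submodule.mem_span_singleton_self g)
  have hgF : g ∉ F := by
    intro hgF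
    exact hg0 (by simpa [real_inner_self_eq_norm_sq, pow_eq_zero_iff] using
      (norm_eq_zero.mp (by
        have := hg g hgF
        rw [real_inner_self_eq_norm_sq] at this
        nlinarith [norm_nonneg g])))
  haveI : FiniteDimensional ℝ V := by
    apply Submodule.finiteDimensional_sup
  have hlt' : F < V := lt_of_le_of_ne le_sup_left (fun h => hgF (h ▸ hgV))
  have := Submodule.finrank_lt_finrank_of_lt hlt'
  omega

end Aux

set_option maxHeartbeats 1000000 in
/-- Courant–Hilbert domain decomposition (Neumann bracketing), abstractly: `A` is the
(nonnegative, symmetric) Laplacian on `L²(D)`, and the restriction map `J` to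
`L²(D₁) × L²(D₂)` is an isometry along which the quadratic form of `A` decomposes as the
sum of the forms of the Neumann Laplacians `A₁`, `A₂` on the two pieces. If each `Aᵢ` has
exactly `kᵢ` eigenvalues (with multiplicity) below `κ`, characterized by the min-max
principle, then `A` has at most `k₁ + k₂` eigenvalues below `κ`. -/
theorem neumann_bracketing_eigenvalue_count
    {H H₁ H₂ : Type*} [NormedAddCommGroup H] [InnerProductSpace ℝ H]
    [NormedAddCommGroup H₁] [InnerProductSpace ℝ H₁]
    [NormedAddCommGroup H₂] [InnerProductSpace ℝ H₂]
    (A : H →ₗ[ℝ] H) (A₁ : H₁ →ₗ[ℝ] H₁) (A₂ : H₂ →ₗ[ℝ] H₂)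
    (hA : ∀ x y : H, (inner ℝ (A x) y : ℝ) = inner ℝ x (A y))
    (hA₁ : ∀ x y : H₁, (inner ℝ (A₁ x) y : ℝ) = inner ℝ x (A₁ y))
    (hA₂ : ∀ x y : H₂, (inner ℝ (A₂ x) y : ℝ) = inner ℝ x (A₂ y))
    (hA0 : ∀ x : H, 0 ≤ (inner ℝ (A x) x : ℝ))
    (hA₁0 : ∀ x : H₁, 0 ≤ (inner ℝ (A₁ x) x : ℝ))
    (hA₂0 : ∀ x : H₂, 0 ≤ (inner ℝ (A₂ x) x : ℝ))
    (J : H →ₗᵢ[ℝ] H₁ × H₂)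
    (hform : ∀ f : H,
      (inner ℝ (A f) f : ℝ) = inner ℝ (A₁ (J f).1) (J f).1 + inner ℝ (A₂ (J f).2) (J f).2)
    (κ : ℝ) (hκ : 0 < κ) (k₁ k₂ : ℕ)
    (hk₁ : Module.finrank ℝ
      ↥(⨆ μ ∈ Set.Iio κ, Module.End.eigenspace (A₁ : Module.End ℝ H₁) μ) = k₁)
    (hk₂ : Module.finrank ℝ
      ↥(⨆ μ ∈ Set.Iio κ, Module.End.eigenspace (A₂ : Module.End ℝ H₂) μ) = k₂)
    (hdisc₁ : ∀ V : Submodule ℝ H₁,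
      (∀ f ∈ V, f ≠ 0 → (inner ℝ (A₁ f) f : ℝ) < κ * ‖f‖ ^ 2) → Module.finrank ℝ V ≤ k₁)
    (hdisc₂ : ∀ V : Submodule ℝ H₂,
      (∀ f ∈ V, f ≠ 0 → (inner ℝ (A₂ f) f : ℝ) < κ * ‖f‖ ^ 2) → Module.finrank ℝ V ≤ k₂) :
    Module.finrank ℝ
      ↥(⨆ μ ∈ Set.Iio κ, Module.End.eigenspace (A : Module.End ℝ H) μ) ≤ k₁ + k₂ := by
  classical
  set EA := ⨆ μ ∈ Set.Iio κ, Module.End.eigenspace (A : Module.End ℝ H) μ with hEA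
  set F₁ := ⨆ μ ∈ Set.Iio κ, Module.End.eigenspace (A₁ : Module.End ℝ H₁) μ with hF₁
  set F₂ := ⨆ μ ∈ Set.Iio κ, Module.End.eigenspace (A₂ : Module.End ℝ H₂) μ with hF₂
  by_cases hfd : FiniteDimensional ℝ EA
  swap
  · rw [Module.finrank_of_infinite_dimensional hfd]; omega
  haveI := hfd
  haveI : FiniteDimensional ℝ F₁ := nb_finiteDimensional A₁ hA₁ κ k₁ hk₁ hdisc₁
  haveI : FiniteDimensional ℝ F₂ := nb_finiteDimensional A₂ hA₂ κ k₂ hk₂ hdisc₂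
  haveI : CompleteSpace F₁ := FiniteDimensional.complete ℝ F₁
  haveI : CompleteSpace F₂ := FiniteDimensional.complete ℝ F₂
  -- the linear map from EA to F₁ × F₂ by orthogonal projection of the pieces
  set L : EA →ₗ[ℝ] F₁ × F₂ :=
    (((Submodule.orthogonalProjectionOnto F₁).toLinearMap.comp (LinearMap.fst ℝ H₁ H₂)).prod
      ((Submodule.orthogonalProjectionOnto F₂).toLinearMap.comp (LinearMap.snd ℝ H₁ H₂))).comp
      (J.toLinearMap.comp EA.subtype) with hL
  by_cases hinj : Function.Injective L
  · have := LinearMap.finrank_le_finrank_of_injective hinj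
    rwa [Module.finrank_prod, hk₁, hk₂] at this
  · obtain ⟨x, hxker, hx0⟩ := Submodule.exists_mem_ne_zero_of_ne_bot
      (fun h => hinj (LinearMap.ker_eq_bot.mp h))
    rw [LinearMap.mem_ker] at hxker
    have hx1 : Submodule.orthogonalProjectionOnto F₁ (J (x : H)).1 = 0 := congrArg Prod.fst hxker
    have hx2 : Submodule.orthogonalProjectionOnto F₂ (J (x : H)).2 = 0 := congrArg Prod.snd hxker
    rw [Submodule.orthogonalProjectionOnto_eq_zero_iff] at hx1 hx2
    set g₁ := (J (x : H)).1
    set g₂ := (J (x : H)).2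
    have hxH : (x : H) ≠ 0 := fun h => hx0 (Subtype.ext h)
    have hxform : (inner ℝ (A (x : H)) (x : H) : ℝ) < κ * ‖(x : H)‖ ^ 2 :=
      nb_form_lt A hA κ x.2 hxH
    have hnormx : ‖(x : H)‖ ^ 2 ≤ ‖g₁‖ ^ 2 + ‖g₂‖ ^ 2 := by
      rw [← J.norm_map (x : H), Prod.norm_def]
      rcases max_cases ‖g₁‖ ‖g₂‖ with ⟨h, _⟩ | ⟨h, _⟩ <;> rw [h] <;> nlinarith [sq_nonneg ‖g₁‖, sq_nonneg ‖g₂‖]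
    have hsum : (inner ℝ (A₁ g₁) g₁ : ℝ) + inner ℝ (A₂ g₂) g₂ < κ * (‖g₁‖ ^ 2 + ‖g₂‖ ^ 2) := by
      have := hform (x : H)
      nlinarith
    by_cases hc : (inner ℝ (A₁ g₁) g₁ : ℝ) < κ * ‖g₁‖ ^ 2
    · have hg₁0 : g₁ = 0 := nb_no_orth A₁ hA₁ κ k₁ hk₁ hdisc₁ hx1 hc
      have h0 : (inner ℝ (A₁ g₁) g₁ : ℝ) = 0 := by simp [hg₁0]
      have hn0 : ‖g₁‖ = 0 := by simp [hg₁0]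
      have hc2 : (inner ℝ (A₂ g₂) g₂ : ℝ) < κ * ‖g₂‖ ^ 2 := by
        have h' := hsum
        rw [h0, hn0] at h'
        nlinarith [h']
      have hg₂0 : g₂ = 0 := nb_no_orth A₂ hA₂ κ k₂ hk₂ hdisc₂ hx2 hc2
      have hxnorm : ‖(x : H)‖ = 0 := by
        rw [← J.norm_map, Prod.norm_def]
        have e1 : ‖(J (x : H)).1‖ = 0 := by rw [← hn0]
        have e2 : ‖(J (x : H)).2‖ = 0 := by simp [← hg₂0]; rfl
        rw [e1, e2]
        simp
      exact absurd (norm_eq_zero.mp hxnorm) hxH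
    · push_neg at hc
      have hc2 : (inner ℝ (A₂ g₂) g₂ : ℝ) < κ * ‖g₂‖ ^ 2 := by nlinarith
      have hg₂0 : g₂ = 0 := nb_no_orth A₂ hA₂ κ k₂ hk₂ hdisc₂ hx2 hc2
      have h0 : (inner ℝ (A₂ g₂) g₂ : ℝ) = 0 := by simp [hg₂0]
      have hn0 : ‖g₂‖ = 0 := by simp [hg₂0]
      have h' := hsum
      rw [h0, hn0] at h'
      nlinarith [h']
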